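/- The Laplacian simplex of the complete graph K_n equals {x ∈ R^{n-1} : A x ≤ 1}, where A is the n×(n-1) matrix of the signed vertex-edge incidence matrix of a path: A has rows -e_1^T, (e_1 - e_2)^T, ..., (e_{n-2} - e_{n-1})^T, e_{n-1}^T. In particular T_{K_n} is reflexive. -/

import Mathlib

namespace CGSAux

def vK (n : ℕ) (i : Fin n) : Fin (n - 1) → ℝ := fun j =>
  if (i : ℕ) ≤ (j : ℕ) then (n : ℝ) - 1 - (j : ℕ) else -((j : ℕ) + 1)

def BK (n : ℕ) : Matrix (Fin n) (Fin (n - 1)) ℝ := fun i j =>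
  if (i : ℕ) = (j : ℕ) + 1 then 1 else if (i : ℕ) = (j : ℕ) then -1 else 0

lemma mulVec_eq {n : ℕ} (hn : 2 ≤ n) (x : Fin (n - 1) → ℝ) (i : Fin n) :
    (BK n).mulVec x i =
      (if h : 0 < (i : ℕ) then x ⟨(i : ℕ) - 1, by have := i.isLt; omega⟩ else 0)
      - (if h : (i : ℕ) < n - 1 then x ⟨(i : ℕ), h⟩ else 0) := by
  have hsplit : ∀ j : Fin (n - 1), BK n i j * x j =
      (if (i : ℕ) = (j : ℕ) + 1 then x j else 0)
        - (if (i : ℕ) = (j : ℕ) then x j else 0) := by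
    intro j; simp only [BK]
    split_ifs
    all_goals first | ring1 | (exfalso; omega)
  simp only [Matrix.mulVec, dotProduct, hsplit, Finset.sum_sub_distrib]
  congr 1
  · by_cases h : 0 < (i : ℕ)
    · rw [dif_pos h,
        Finset.sum_eq_single (⟨(i : ℕ) - 1, by have := i.isLt; omega⟩ : Fin (n - 1))]
      · rw [if_pos (show (i : ℕ) = (i : ℕ) - 1 + 1 by omega)]
      · intro b _ hb; rw [if_neg]; intro hc; exact hb (Fin.ext (by simp; omega))
      · simp
    · rw [dif_neg h, Finset.sum_eq_zero]; intro j _; rw [if_neg]; omega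
  · by_cases h : (i : ℕ) < n - 1
    · rw [dif_pos h, Finset.sum_eq_single (⟨(i : ℕ), h⟩ : Fin (n - 1))]
      · rw [if_pos rfl]
      · intro b _ hb; rw [if_neg]; intro hc; exact hb (Fin.ext (by simp; omega))
      · simp
    · rw [dif_neg h, Finset.sum_eq_zero]; intro j _; rw [if_neg]
      have := j.isLt; omega

lemma key1 {n : ℕ} (hn : 2 ≤ n) (k i : Fin n) :
    (BK n).mulVec (vK n k) i = if i = k then 1 - (n : ℝ) else 1 := by
  rw [mulVec_eq hn]
  have hi := i.isLt; have hk := k.isLt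
  simp only [vK, Fin.ext_iff]
  rcases Nat.eq_zero_or_pos (i : ℕ) with h0 | h0
  · rw [dif_neg (by omega), dif_pos (by omega : (i : ℕ) < n - 1)]
    by_cases hk0 : (k : ℕ) ≤ (i : ℕ)
    · rw [if_pos hk0, if_pos (by omega)]
      rw [h0]; push_cast; ring
    · rw [if_neg hk0, if_neg (by omega)]; rw [h0]; norm_num
  · have hc : (((i : ℕ) - 1 : ℕ) : ℝ) = (i : ℕ) - 1 := by
      rw [Nat.cast_sub h0, Nat.cast_one]
    by_cases h2 : (i : ℕ) < n - 1
    · rw [dif_pos h0, dif_pos h2]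
      simp only [hc]
      by_cases hk1 : (k : ℕ) ≤ (i : ℕ) - 1
      · rw [if_pos hk1, if_pos (by omega), if_neg (by omega)]; ring
      · by_cases hk2 : (k : ℕ) ≤ (i : ℕ)
        · rw [if_neg hk1, if_pos hk2, if_pos (by omega)]; ring
        · rw [if_neg hk1, if_neg hk2, if_neg (by omega)]; ring
    · rw [dif_pos h0, dif_neg h2]
      have hieq : (i : ℕ) = n - 1 := by omega
      simp only [hc]
      have hcn : ((i : ℕ) : ℝ) = (n : ℝ) - 1 := by
        rw [hieq, Nat.cast_sub (by omega : 1 ≤ n), Nat.cast_one]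
      by_cases hk1 : (k : ℕ) ≤ (i : ℕ) - 1
      · rw [if_pos hk1, if_neg (by omega)]; rw [hcn]; ring
      · rw [if_neg hk1, if_pos (by omega)]; rw [hcn]; ring

lemma colsum {n : ℕ} (hn : 2 ≤ n) (j : Fin (n - 1)) :
    ∑ i : Fin n, BK n i j = 0 := by
  have hj := j.isLt
  have hsplit : ∀ i : Fin n, BK n i j =
      (if (i : ℕ) = (j : ℕ) + 1 then (1 : ℝ) else 0)
        - (if (i : ℕ) = (j : ℕ) then 1 else 0) := by
    intro i; simp only [BK]
    split_ifs
    all_goals first | ring1 | (exfalso; omega)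
  simp only [hsplit, Finset.sum_sub_distrib]
  have e1 : ∑ i : Fin n, (if (i : ℕ) = (j : ℕ) + 1 then (1 : ℝ) else 0) = 1 := by
    rw [Finset.sum_eq_single (⟨(j : ℕ) + 1, by omega⟩ : Fin n)]
    · rw [if_pos rfl]
    · intro b _ hb; rw [if_neg]; intro hc; exact hb (Fin.ext (by simp; omega))
    · simp
  have e2 : ∑ i : Fin n, (if (i : ℕ) = (j : ℕ) then (1 : ℝ) else 0) = 1 := by
    rw [Finset.sum_eq_single (⟨(j : ℕ), by omega⟩ : Fin n)]
    · rw [if_pos rfl]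
    · intro b _ hb; rw [if_neg]; intro hc; exact hb (Fin.ext (by simp; omega))
    · simp
  rw [e1, e2]; ring

lemma sum_mulVec {n : ℕ} (hn : 2 ≤ n) (x : Fin (n - 1) → ℝ) :
    ∑ i : Fin n, (BK n).mulVec x i = 0 := by
  simp only [Matrix.mulVec, dotProduct]
  rw [Finset.sum_comm]
  have : ∀ j : Fin (n - 1), ∑ i : Fin n, BK n i j * x j = 0 := by
    intro j; rw [← Finset.sum_mul, colsum hn, zero_mul]
  simp only [this, Finset.sum_const_zero]

lemma inj {n : ℕ} (hn : 2 ≤ n) (x : Fin (n - 1) → ℝ)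
    (h : (BK n).mulVec x = 0) : x = 0 := by
  have key : ∀ m : ℕ, ∀ j : Fin (n - 1), (j : ℕ) = m → x j = 0 := by
    intro m
    induction m using Nat.strong_induction_on with
    | _ m ih =>
      intro j hj
      have hrow : (BK n).mulVec x ⟨(j : ℕ), by have := j.isLt; omega⟩ = 0 := by
        rw [h]; rfl
      rw [mulVec_eq hn] at hrow
      rw [dif_pos (show ((⟨(j : ℕ), _⟩ : Fin n) : ℕ) < n - 1 from j.isLt)] at hrow
      have hxj : x ⟨(j : ℕ), j.isLt⟩ = x j := congrArg x (Fin.ext rfl)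
      by_cases h0 : 0 < (j : ℕ)
      · rw [dif_pos h0] at hrow
        have h1 : x ⟨(j : ℕ) - 1, by have := j.isLt; omega⟩ = 0 :=
          ih ((j : ℕ) - 1) (by omega) _ rfl
        rw [h1, hxj] at hrow
        linarith
      · rw [dif_neg h0] at hrow
        rw [hxj] at hrow
        linarith
  funext j
  exact key (j : ℕ) j rfl

end CGSAux

/-- The Laplacian simplex `T_{K_n}` (convex hull of the rows of
`L_B = L(K_n)·A'`) equals `{x : A x ≤ 𝟙}`, where `A` is the signed
vertex-edge incidence matrix of a path, with rows
`-e_1ᵀ, (e_1-e_2)ᵀ, …, (e_{n-2}-e_{n-1})ᵀ, e_{n-1}ᵀ`.  In particular `T_{K_n}`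
is reflexive (it contains the origin in its interior and is defined by an
integer matrix with right-hand sides all `1`). -/
theorem complete_graph_simplex_facets {n : ℕ} (hn : 2 ≤ n)
    (T : Set (Fin (n - 1) → ℝ))
    (hT : T = convexHull ℝ (Set.range fun i : Fin n =>
      fun j : Fin (n - 1) =>
        (if (i : ℕ) ≤ (j : ℕ) then (n : ℝ) - 1 - (j : ℕ)
         else -((j : ℕ) + 1))))
    (A : Matrix (Fin n) (Fin (n - 1)) ℤ)
    (hA : ∀ i j, A i j =
      if (i : ℕ) = (j : ℕ) + 1 then 1 else if (i : ℕ) = (j : ℕ) then -1 else 0) :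
    T = {x : Fin (n - 1) → ℝ |
        ∀ i : Fin n, (A.map (Int.cast : ℤ → ℝ)).mulVec x i ≤ 1} ∧
    (0 : Fin (n - 1) → ℝ) ∈ interior T := by
  have hAB : A.map (Int.cast : ℤ → ℝ) = CGSAux.BK n := by
    funext i j
    rw [Matrix.map_apply, hA]
    show ((if (i : ℕ) = (j : ℕ) + 1 then (1 : ℤ) else if (i : ℕ) = (j : ℕ) then -1 else 0) : ℤ)
      = CGSAux.BK n i j
    unfold CGSAux.BK
    split_ifs <;> norm_num
  have hT' : T = convexHull ℝ (Set.range (CGSAux.vK n)) := hT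
  have hn0 : (0 : ℝ) < n := by exact_mod_cast (by omega : 0 < n)
  have hnR : (2 : ℝ) ≤ n := by exact_mod_cast hn
  -- the main set equality
  have hmain : T = {x : Fin (n - 1) → ℝ | ∀ i : Fin n, (CGSAux.BK n).mulVec x i ≤ 1} := by
    rw [hT']
    apply Set.Subset.antisymm
    · apply convexHull_min
      · rintro p ⟨k, rfl⟩
        intro i
        rw [CGSAux.key1 hn]
        split_ifs
        · linarith
        · exact le_refl 1
      · have hrw : {x : Fin (n - 1) → ℝ | ∀ i : Fin n, (CGSAux.BK n).mulVec x i ≤ 1}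
            = ⋂ i : Fin n, {x | (CGSAux.BK n).mulVec x i ≤ 1} := by
          ext x; simp [Set.mem_iInter]
        rw [hrw]
        refine convex_iInter fun i => convex_halfSpace_le ?_ 1
        exact ⟨fun a b => by simp [Matrix.mulVec_add],
               fun c a => by simp [Matrix.mulVec_smul]⟩
    · intro x hx
      set c : Fin n → ℝ := fun i => (1 - (CGSAux.BK n).mulVec x i) / n with hcdef
      have hc0 : ∀ i ∈ Finset.univ, (0 : ℝ) ≤ c i := by
        intro i _
        exact div_nonneg (by linarith [hx i]) hn0.le
      have hcsum : ∑ i : Fin n, c i = 1 := by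
        simp only [hcdef]
        rw [← Finset.sum_div, Finset.sum_sub_distrib, CGSAux.sum_mulVec hn,
          Finset.sum_const, Finset.card_univ, Fintype.card_fin]
        field_simp
        simp
      have hmem := Finset.centerMass_mem_convexHull Finset.univ hc0
        (by rw [hcsum]; norm_num) (fun i _ => Set.mem_range_self (f := CGSAux.vK n) i)
      rw [Finset.centerMass_eq_of_sum_1 _ _ hcsum] at hmem
      have hBy : ∀ i : Fin n,
          (CGSAux.BK n).mulVec (∑ k : Fin n, c k • CGSAux.vK n k) i = 1 - n * c i := by
        intro i
        have hlin : (CGSAux.BK n).mulVec (∑ k : Fin n, c k • CGSAux.vK n k)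
            = ∑ k : Fin n, c k • (CGSAux.BK n).mulVec (CGSAux.vK n k) := by
          simp only [← Matrix.mulVecLin_apply, map_sum, map_smul]
        rw [hlin]
        simp only [Finset.sum_apply, Pi.smul_apply, smul_eq_mul, CGSAux.key1 hn]
        calc ∑ k : Fin n, c k * (if i = k then 1 - (n : ℝ) else 1)
            = ∑ k : Fin n, (c k + if i = k then -((n : ℝ) * c k) else 0) := by
              refine Finset.sum_congr rfl fun k _ => ?_
              split_ifs <;> ring
          _ = (∑ k : Fin n, c k) + ∑ k : Fin n, (if i = k then -((n : ℝ) * c k) else 0) :=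
              Finset.sum_add_distrib
          _ = 1 + -((n : ℝ) * c i) := by rw [hcsum, Finset.sum_ite_eq]; simp
          _ = 1 - n * c i := by ring
      have hxy : x = ∑ k : Fin n, c k • CGSAux.vK n k := by
        have hsub : (CGSAux.BK n).mulVec (x - ∑ k : Fin n, c k • CGSAux.vK n k) = 0 := by
          funext i
          rw [Matrix.mulVec_sub]
          have hci : (n : ℝ) * c i = 1 - (CGSAux.BK n).mulVec x i := by
            rw [hcdef]; field_simp
          simp only [Pi.sub_apply, Pi.zero_apply, hBy i]
          rw [hci]; ring
        have := CGSAux.inj hn _ hsub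
        exact sub_eq_zero.mp this
      rw [hxy]
      exact hmem
  constructor
  · rw [hAB]; exact hmain
  · have hU : IsOpen {x : Fin (n - 1) → ℝ | ∀ i : Fin n, (CGSAux.BK n).mulVec x i < 1} := by
      have hrw : {x : Fin (n - 1) → ℝ | ∀ i : Fin n, (CGSAux.BK n).mulVec x i < 1}
          = ⋂ i : Fin n, {x | (CGSAux.BK n).mulVec x i < 1} := by
        ext x; simp [Set.mem_iInter]
      rw [hrw]
      refine isOpen_iInter_of_finite fun i => ?_
      have hcont : Continuous fun x : Fin (n - 1) → ℝ => (CGSAux.BK n).mulVec x i := by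
        have h1 : Continuous fun x : Fin (n - 1) → ℝ => (CGSAux.BK n).mulVecLin x :=
          (CGSAux.BK n).mulVecLin.continuous_of_finiteDimensional
        exact (continuous_apply i).comp h1
      exact isOpen_lt hcont continuous_const
    have hsub2 : {x : Fin (n - 1) → ℝ | ∀ i : Fin n, (CGSAux.BK n).mulVec x i < 1} ⊆ T := by
      rw [hmain]
      intro x hx i
      exact (hx i).le
    have h0mem : (0 : Fin (n - 1) → ℝ)
        ∈ {x : Fin (n - 1) → ℝ | ∀ i : Fin n, (CGSAux.BK n).mulVec x i < 1} := by
      intro i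
      rw [Matrix.mulVec_zero]
      norm_num
    exact interior_maximal hsub2 hU h0mem
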